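/- Let A be a C*-algebra with a strictly positive element c, and let a = (a_{ij}) be a positive element in the matrix algebra M_n(A). Let d = Σ_{j=1}^n a_{jj} ∈ A be the sum of the diagonal entries of a. Then a ≾ d ⊗ 1_n; moreover, if a belongs to F_{c⊗1_n}(M_n(A)), then d belongs to F_c(A). -/

import Mathlib

open Filter Topology Matrix WithCStarModule

set_option maxHeartbeats 1000000
set_option synthInstance.maxHeartbeats 2000000

namespace Stmt13

variable {A : Type*} [NonUnitalCStarAlgebra A] [PartialOrder A] [StarOrderedRing A]

/-- `d ⊗ 1ₙ`: the block-diagonal matrix `diag (d, …, d)` (`n` copies). -/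
def tensorOne {B : Type*} [Zero B] (d : B) (n : ℕ) : Matrix (Fin n) (Fin n) B :=
  Matrix.diagonal fun _ => d

/-- Positivity for a matrix over a C*-algebra: `a` is positive iff `a = bᴴ * b`
for some matrix `b`. -/
def MatPos {n : ℕ} (a : Matrix (Fin n) (Fin n) A) : Prop :=
  ∃ b : Matrix (Fin n) (Fin n) A, a = bᴴ * b

/-- Cuntz subequivalence `a ≾ b` for `a ∈ M_p(A)`, `b ∈ M_q(A)`: there is a sequence
`(x k)` of `q × p` matrices with `(x k)ᴴ * b * (x k) → a`. -/
def CuntzLeMat {p q : ℕ} (a : Matrix (Fin p) (Fin p) A) (b : Matrix (Fin q) (Fin q) A) :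
    Prop :=
  ∃ x : ℕ → Matrix (Fin q) (Fin p) A,
    Tendsto (fun k => (x k)ᴴ * b * (x k)) atTop (nhds a)

/-- `c` is strictly positive in `A`: `c ≥ 0` and `cAc` is dense in `A`. -/
def StrictlyPositive (c : A) : Prop :=
  0 ≤ c ∧ Dense (Set.range fun a : A => c * a * c)

/-- `g_ε : ℝ⁺ → ℝ⁺`, vanishing on `[0, ε]`, equal to `1` on `[2ε, ∞)`, linear on
`[ε, 2ε]`. -/
noncomputable def gfun (ε : ℝ) : ℝ → ℝ := fun t => min (max ((t - ε) / ε) 0) 1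

/-- `F_c(A) = {b ≥ 0 : g_ε(c)·b = b for some ε > 0}`. -/
noncomputable def Fc (c : A) : Set A :=
  {b : A | 0 ≤ b ∧ ∃ ε : ℝ, 0 < ε ∧ cfcₙ (gfun ε) c * b = b}

/-- `F_{c ⊗ 1ₙ}(Mₙ(A)) = {b positive : g_ε(c ⊗ 1ₙ)·b = b for some ε > 0}`, using that
`g_ε(c ⊗ 1ₙ) = g_ε(c) ⊗ 1ₙ`. -/
noncomputable def FcMat (c : A) (n : ℕ) : Set (Matrix (Fin n) (Fin n) A) :=
  {b | MatPos b ∧ ∃ ε : ℝ, 0 < ε ∧ tensorOne (cfcₙ (gfun ε) c) n * b = b}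

variable {n : ℕ}

/-- Type synonym for matrices over `A`, to be equipped with the operator C⋆-norm coming
from its action on the Hilbert C⋆-module `C⋆ᵐᵒᵈ(A, Fin n → A)`. -/
def MatC (n : ℕ) (A : Type*) : Type _ := Matrix (Fin n) (Fin n) A

namespace MatC

instance : AddCommGroup (MatC n A) :=
  inferInstanceAs (AddCommGroup (Matrix (Fin n) (Fin n) A))

instance : NonUnitalRing (MatC n A) :=
  inferInstanceAs (NonUnitalRing (Matrix (Fin n) (Fin n) A))

instance : Module ℂ (MatC n A) :=
  inferInstanceAs (Module ℂ (Matrix (Fin n) (Fin n) A))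

instance : StarRing (MatC n A) :=
  inferInstanceAs (StarRing (Matrix (Fin n) (Fin n) A))

instance : StarModule ℂ (MatC n A) :=
  inferInstanceAs (StarModule ℂ (Matrix (Fin n) (Fin n) A))

instance : SMulCommClass ℂ (MatC n A) (MatC n A) :=
  ⟨fun c M N => (Matrix.mul_smul M c N).symm⟩

instance : IsScalarTower ℂ (MatC n A) (MatC n A) :=
  ⟨fun c M N => Matrix.smul_mul c M N⟩

lemma mul_entry (M N : MatC n A) (i j : Fin n) :
    (M * N) i j = ∑ k, M i k * N k j :=
  Matrix.mul_apply

lemma star_entry (M : MatC n A) (i j : Fin n) :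
    (star M) i j = star (M j i) := rfl

/-- The underlying linear action of a matrix on `C⋆ᵐᵒᵈ(A, Fin n → A)`. -/
noncomputable def L (M : MatC n A) :
    (C⋆ᵐᵒᵈ(A, Fin n → A)) →ₗ[ℂ] (C⋆ᵐᵒᵈ(A, Fin n → A)) where
  toFun v := (equiv A _).symm (fun i => ∑ j, v j * star (M i j))
  map_add' v w := by
    ext i
    simp [add_mul, Finset.sum_add_distrib]
  map_smul' c v := by
    ext i
    simp [Finset.smul_sum, smul_mul_assoc]

lemma L_apply (M : MatC n A) (v : C⋆ᵐᵒᵈ(A, Fin n → A)) (i : Fin n) :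
    L M v i = ∑ j, v j * star (M i j) := rfl

lemma L_bound (M : MatC n A) (v : C⋆ᵐᵒᵈ(A, Fin n → A)) :
    ‖L M v‖ ≤ (∑ i, ∑ j, ‖M i j‖) * ‖v‖ := by
  calc ‖L M v‖ ≤ ∑ i, ‖L M v i‖ := pi_norm_le_sum_norm _
    _ ≤ ∑ i, ∑ j, ‖M i j‖ * ‖v‖ := by
        refine Finset.sum_le_sum fun i _ => ?_
        rw [L_apply]
        refine (norm_sum_le _ _).trans (Finset.sum_le_sum fun j _ => ?_)
        calc ‖v j * star (M i j)‖ ≤ ‖M i j‖ * ‖v j‖ := by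
              rw [mul_comm, ← norm_star (M i j)]; exact norm_mul_le _ _
          _ ≤ ‖M i j‖ * ‖v‖ := by
              gcongr
              exact norm_apply_le_norm v j
    _ = (∑ i, ∑ j, ‖M i j‖) * ‖v‖ := by rw [Finset.sum_mul]; simp [Finset.sum_mul]

/-- The continuous linear action of a matrix on `C⋆ᵐᵒᵈ(A, Fin n → A)`. -/
noncomputable def toCLM (M : MatC n A) :
    (C⋆ᵐᵒᵈ(A, Fin n → A)) →L[ℂ] (C⋆ᵐᵒᵈ(A, Fin n → A)) :=
  (L M).mkContinuous _ (L_bound M)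

lemma toCLM_apply (M : MatC n A) (v : C⋆ᵐᵒᵈ(A, Fin n → A)) (i : Fin n) :
    toCLM M v i = ∑ j, v j * star (M i j) := rfl

noncomputable instance : Norm (MatC n A) := ⟨fun M => ‖toCLM M‖⟩

lemma norm_def (M : MatC n A) : ‖M‖ = ‖toCLM M‖ := rfl

lemma zero_entry (i j : Fin n) : (0 : MatC n A) i j = 0 := rfl

lemma sub_entry (M N : MatC n A) (i j : Fin n) : (M - N) i j = M i j - N i j := rfl

lemma toCLM_zero : toCLM (0 : MatC n A) = 0 := by
  ext v i
  show toCLM (0 : MatC n A) v i = 0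
  simp [toCLM_apply, zero_entry]

lemma add_entry (M N : MatC n A) (i j : Fin n) : (M + N) i j = M i j + N i j := rfl

lemma neg_entry (M : MatC n A) (i j : Fin n) : (-M) i j = -(M i j) := rfl

lemma smul_entry (c : ℂ) (M : MatC n A) (i j : Fin n) : (c • M) i j = c • (M i j) := rfl

lemma toCLM_add (M N : MatC n A) : toCLM (M + N) = toCLM M + toCLM N := by
  ext v i
  show toCLM (M + N) v i = toCLM M v i + toCLM N v i
  simp only [toCLM_apply, add_entry, star_add, mul_add, Finset.sum_add_distrib]

lemma toCLM_neg (M : MatC n A) : toCLM (-M) = -(toCLM M) := by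
  ext v i
  show toCLM (-M) v i = -(toCLM M v i)
  simp only [toCLM_apply, neg_entry, star_neg, mul_neg, Finset.sum_neg_distrib]

lemma toCLM_smul (c : ℂ) (M : MatC n A) : toCLM (c • M) = (starRingEnd ℂ c) • toCLM M := by
  ext v i
  show toCLM (c • M) v i = (starRingEnd ℂ c) • (toCLM M v i)
  simp only [toCLM_apply, smul_entry, star_smul, starRingEnd_apply, mul_smul_comm,
    Finset.smul_sum]

lemma toCLM_mul (M N : MatC n A) : toCLM (M * N) = (toCLM M).comp (toCLM N) := by
  ext v i
  show toCLM (M * N) v i = toCLM M (toCLM N v) i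
  simp only [toCLM_apply, mul_entry, star_sum, StarMul.star_mul, Finset.sum_mul,
    Finset.mul_sum, mul_assoc]
  rw [Finset.sum_comm]

lemma entry_norm_le (M : MatC n A) (i j : Fin n) : ‖M i j‖ ≤ ‖M‖ := by
  rcases eq_or_ne (M i j) 0 with h | h
  · simp [h, norm_def]
    positivity
  · have hv : ‖toCLM M ((equiv A _).symm (Pi.single j (M i j)))‖ ≤ ‖M‖ * ‖M i j‖ := by
      calc ‖toCLM M ((equiv A _).symm (Pi.single j (M i j)))‖
          ≤ ‖M‖ * ‖(equiv A (Fin n → A)).symm (Pi.single j (M i j))‖ :=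
            (toCLM M).le_opNorm _
        _ = ‖M‖ * ‖M i j‖ := by rw [norm_single]
    have happ : toCLM M ((equiv A _).symm (Pi.single j (M i j))) i
        = M i j * star (M i j) := by
      rw [toCLM_apply]
      rw [Finset.sum_eq_single j]
      · simp
      · intro k _ hk
        simp [Pi.single_eq_of_ne hk]
      · simp
    have h1 : ‖M i j * star (M i j)‖ ≤ ‖M‖ * ‖M i j‖ := by
      rw [← happ]
      exact (norm_apply_le_norm _ i).trans hv
    rw [CStarRing.norm_self_mul_star] at h1
    have := norm_pos_iff.mpr h
    calc ‖M i j‖ = ‖M i j‖ * ‖M i j‖ / ‖M i j‖ := by field_simp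
      _ ≤ ‖M‖ * ‖M i j‖ / ‖M i j‖ := by gcongr
      _ = ‖M‖ := by field_simp

lemma norm_le_sum (M : MatC n A) : ‖M‖ ≤ ∑ i, ∑ j, ‖M i j‖ := by
  rw [norm_def]
  refine ContinuousLinearMap.opNorm_le_bound _ (by positivity) fun v => ?_
  exact L_bound M v

noncomputable instance instNormedAddCommGroup : NormedAddCommGroup (MatC n A) :=
  AddGroupNorm.toNormedAddCommGroup
  { toFun := fun M => ‖toCLM M‖
    map_zero' := by
      show ‖toCLM (0 : MatC n A)‖ = 0
      rw [toCLM_zero]; exact ContinuousLinearMap.opNorm_zero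
    add_le' := fun M N => by
      show ‖toCLM (M + N)‖ ≤ ‖toCLM M‖ + ‖toCLM N‖
      rw [toCLM_add]; exact ContinuousLinearMap.opNorm_add_le _ _
    neg' := fun M => by
      show ‖toCLM (-M)‖ = ‖toCLM M‖
      rw [toCLM_neg]; exact ContinuousLinearMap.opNorm_neg _
    eq_zero_of_map_eq_zero' := fun M hM => by
      have hM' : toCLM M = 0 := (ContinuousLinearMap.opNorm_zero_iff (toCLM M)).mp hM
      funext i j
      have h1 : ‖M i j‖ ≤ 0 := by
        have h := entry_norm_le M i j
        rwa [norm_def, hM', ContinuousLinearMap.opNorm_zero] at h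
      have h2 : M i j = 0 := norm_le_zero_iff.mp h1
      exact h2.trans (zero_entry i j).symm }

noncomputable instance instNonUnitalNormedRing : NonUnitalNormedRing (MatC n A) :=
  { MatC.instNormedAddCommGroup, (inferInstance : NonUnitalRing (MatC n A)) with
    norm_mul_le := fun M N => by
      change ‖toCLM (M * N)‖ ≤ ‖toCLM M‖ * ‖toCLM N‖
      rw [toCLM_mul]
      exact ContinuousLinearMap.opNorm_comp_le _ _ }

noncomputable instance : NormedSpace ℂ (MatC n A) where
  norm_smul_le c M := by
    change ‖toCLM (c • M)‖ ≤ ‖c‖ * ‖toCLM M‖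
    rw [toCLM_smul, ← Complex.norm_conj c]
    exact ContinuousLinearMap.opNorm_smul_le (starRingEnd ℂ c) (toCLM M)

open scoped InnerProductSpace in
lemma inner_toCLM_left (M : MatC n A) (v w : C⋆ᵐᵒᵈ(A, Fin n → A)) :
    ⟪toCLM M v, w⟫_A = ⟪v, toCLM (star M) w⟫_A := by
  simp only [pi_inner, inner_def, toCLM_apply, star_entry, star_sum, StarMul.star_mul,
    star_star, Finset.sum_mul, Finset.mul_sum, mul_assoc]
  exact Finset.sum_comm

open scoped InnerProductSpace in
instance instCStarRing : CStarRing (MatC n A) where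
  norm_mul_self_le M := by
    have key : ∀ v : C⋆ᵐᵒᵈ(A, Fin n → A), ‖toCLM M v‖^2 ≤ ‖star M * M‖ * ‖v‖^2 := by
      intro v
      calc ‖toCLM M v‖^2 = ‖⟪toCLM M v, toCLM M v⟫_A‖ := CStarModule.norm_sq_eq (A := A)
        _ = ‖⟪v, toCLM (star M * M) v⟫_A‖ := by
            rw [inner_toCLM_left, toCLM_mul, ContinuousLinearMap.comp_apply]
        _ ≤ ‖v‖ * ‖toCLM (star M * M) v‖ := CStarModule.norm_inner_le (A := A) (E := C⋆ᵐᵒᵈ(A, Fin n → A))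
        _ ≤ ‖v‖ * (‖star M * M‖ * ‖v‖) := by
            gcongr
            exact (toCLM _).le_opNorm v
        _ = ‖star M * M‖ * ‖v‖^2 := by ring
    have h2 : ‖M‖ ≤ Real.sqrt ‖star M * M‖ := by
      rw [norm_def]
      refine ContinuousLinearMap.opNorm_le_bound _ (Real.sqrt_nonneg _) fun v => ?_
      rw [← Real.sqrt_sq (norm_nonneg (toCLM M v))]
      calc Real.sqrt (‖toCLM M v‖^2) ≤ Real.sqrt (‖star M * M‖ * ‖v‖^2) :=
            Real.sqrt_le_sqrt (key v)
        _ = Real.sqrt ‖star M * M‖ * ‖v‖ := by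
            rw [Real.sqrt_mul (norm_nonneg _), Real.sqrt_sq (norm_nonneg _)]
    calc ‖M‖ * ‖M‖ ≤ Real.sqrt ‖star M * M‖ * Real.sqrt ‖star M * M‖ :=
          mul_le_mul h2 h2 (norm_nonneg _) (Real.sqrt_nonneg _)
      _ = ‖star M * M‖ := Real.mul_self_sqrt (norm_nonneg _)

instance : CompleteSpace (MatC n A) := by
  refine Metric.complete_of_cauchySeq_tendsto fun u hu => ?_
  have hent : ∀ i j, ∃ x : A, Tendsto (fun k => u k i j) atTop (𝓝 x) := by
    intro i j
    refine cauchySeq_tendsto_of_complete ?_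
    have hlip : LipschitzWith 1 (fun M : MatC n A => M i j) := by
      refine LipschitzWith.of_dist_le_mul fun M N => ?_
      simp only [NNReal.coe_one, one_mul, dist_eq_norm]
      rw [← sub_entry]
      exact entry_norm_le (M - N) i j
    exact hlip.uniformContinuous.comp_cauchySeq hu
  choose g hg using hent
  let G : MatC n A := fun i j => g i j
  refine ⟨G, ?_⟩
  rw [tendsto_iff_norm_sub_tendsto_zero]
  have hGe : ∀ i j, G i j = g i j := fun i j => rfl
  have hbound : ∀ k, ‖u k - G‖ ≤ ∑ i, ∑ j, ‖u k i j - g i j‖ := fun k => by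
    have := norm_le_sum (u k - G)
    simpa [sub_entry, hGe] using this
  refine squeeze_zero (fun k => norm_nonneg _) hbound ?_
  have : (0:ℝ) = ∑ i : Fin n, ∑ j : Fin n, (0:ℝ) := by simp
  rw [this]
  refine tendsto_finset_sum _ fun i _ => tendsto_finset_sum _ fun j _ => ?_
  exact tendsto_iff_norm_sub_tendsto_zero.mp (hg i j)

noncomputable instance : NonUnitalCStarAlgebra (MatC n A) where

end MatC

section Sqrt

variable {n : ℕ}

lemma exists_sqrt (a : Matrix (Fin n) (Fin n) A) (h : ∃ b : Matrix (Fin n) (Fin n) A, a = bᴴ * b) :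
    ∃ s : Matrix (Fin n) (Fin n) A, sᴴ = s ∧ s * s = a := by
  obtain ⟨b, hb⟩ := h
  let a' : MatC n A := a
  let b' : MatC n A := b
  have ha' : a' = star b' * b' := hb
  have hsa : IsSelfAdjoint a' := ha' ▸ IsSelfAdjoint.star_mul_self b'
  have hspec : ∀ x ∈ quasispectrum ℝ a', 0 ≤ x := by
    rw [Unitization.quasispectrum_eq_spectrum_inr' ℝ ℂ a']
    intro x hx
    have h2 : (↑a' : Unitization ℂ (MatC n A)) = star (↑b' : Unitization ℂ (MatC n A)) * ↑b' := by
      rw [ha']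
      simp
    rw [h2] at hx
    exact spectrum_star_mul_self_nonneg x hx
  have hcont : ContinuousOn Real.sqrt (quasispectrum ℝ a') :=
    Real.continuous_sqrt.continuousOn
  have hs_sa : IsSelfAdjoint (cfcₙ Real.sqrt a') := cfcₙ_predicate _ _
  have hmul : cfcₙ Real.sqrt a' * cfcₙ Real.sqrt a' = a' := by
    rw [← cfcₙ_mul Real.sqrt Real.sqrt a' hcont Real.sqrt_zero hcont Real.sqrt_zero]
    have : cfcₙ (fun x => Real.sqrt x * Real.sqrt x) a' = cfcₙ (fun x : ℝ => x) a' :=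
      cfcₙ_congr fun x hx => Real.mul_self_sqrt (hspec x hx)
    rw [this, cfcₙ_id' ℝ a']
  exact ⟨(cfcₙ Real.sqrt a' : MatC n A), hs_sa.star_eq, hmul⟩

end Sqrt

/-! Scalar functions used for the approximation. -/

/-- `Ffun k t = m·τ/(m·τ+1)` where `m = k+1`, `τ = max t 0`. -/
noncomputable def Ffun (k : ℕ) : ℝ → ℝ :=
  fun t => ((k : ℝ) + 1) * max t 0 / (((k : ℝ) + 1) * max t 0 + 1)

/-- `hfun k t = m·√τ/(m·τ+1)`. -/
noncomputable def hfun (k : ℕ) : ℝ → ℝ :=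
  fun t => ((k : ℝ) + 1) * Real.sqrt (max t 0) / (((k : ℝ) + 1) * max t 0 + 1)

lemma denom_pos (k : ℕ) (t : ℝ) : 0 < ((k : ℝ) + 1) * max t 0 + 1 := by
  have h1 : (0:ℝ) ≤ max t 0 := le_max_right t 0
  positivity

lemma Ffun_cont (k : ℕ) : Continuous (Ffun k) := by
  apply Continuous.div
  · fun_prop
  · fun_prop
  · exact fun x => (denom_pos k x).ne'

lemma hfun_cont (k : ℕ) : Continuous (hfun k) := by
  apply Continuous.div
  · fun_prop
  · fun_prop
  · exact fun x => (denom_pos k x).ne'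

lemma Ffun_zero (k : ℕ) : Ffun k 0 = 0 := by simp [Ffun]

lemma hfun_zero (k : ℕ) : hfun k 0 = 0 := by simp [hfun]

lemma Ffun_nonneg (k : ℕ) (t : ℝ) : 0 ≤ Ffun k t := by
  have h1 : (0:ℝ) ≤ max t 0 := le_max_right t 0
  unfold Ffun
  positivity

lemma Ffun_le_one (k : ℕ) (t : ℝ) : Ffun k t ≤ 1 := by
  have h1 : (0:ℝ) ≤ max t 0 := le_max_right t 0
  rw [Ffun, div_le_one (denom_pos k t)]
  linarith

section Est

variable (d : A) (hd : 0 ≤ d) (k : ℕ)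

include hd

lemma HdH :
    cfcₙ (hfun k) d * d * cfcₙ (hfun k) d = cfcₙ (Ffun k) d * cfcₙ (Ffun k) d := by
  have hd_sa : IsSelfAdjoint d := .of_nonneg hd
  have hc : ContinuousOn (hfun k) (quasispectrum ℝ d) := (hfun_cont k).continuousOn
  have hF : ContinuousOn (Ffun k) (quasispectrum ℝ d) := (Ffun_cont k).continuousOn
  have hid : ContinuousOn (fun t : ℝ => t) (quasispectrum ℝ d) := continuousOn_id
  have hidh : ContinuousOn (fun t : ℝ => t * hfun k t) (quasispectrum ℝ d) :=
    hid.mul hc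
  have e1 : cfcₙ (hfun k) d * d * cfcₙ (hfun k) d
      = cfcₙ (fun t => hfun k t * (t * hfun k t)) d := by
    rw [cfcₙ_mul _ _ d hc (hfun_zero k) hidh (by simp [hfun_zero])]
    rw [cfcₙ_mul _ _ d hid rfl hc (hfun_zero k)]
    rw [cfcₙ_id' ℝ d, mul_assoc]
  rw [e1, ← cfcₙ_mul (Ffun k) (Ffun k) d hF (Ffun_zero k) hF (Ffun_zero k)]
  apply cfcₙ_congr
  intro t ht
  have ht0 : 0 ≤ t := quasispectrum_nonneg_of_nonneg d hd t ht
  have hmax : max t 0 = t := max_eq_left ht0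
  have hsq : Real.sqrt t * Real.sqrt t = t := Real.mul_self_sqrt ht0
  have hD : ((k : ℝ) + 1) * t + 1 ≠ 0 := by
    have := denom_pos k t
    rw [hmax] at this
    exact this.ne'
  simp only [hfun, Ffun, hmax]
  field_simp
  linear_combination t * hsq

lemma errbound :
    ‖d - cfcₙ (Ffun k) d * d - d * cfcₙ (Ffun k) d + cfcₙ (Ffun k) d * d * cfcₙ (Ffun k) d‖
      ≤ 1 / (4 * ((k : ℝ) + 1)) := by
  have hd_sa : IsSelfAdjoint d := .of_nonneg hd
  have hF : ContinuousOn (Ffun k) (quasispectrum ℝ d) := (Ffun_cont k).continuousOn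
  have hid : ContinuousOn (fun t : ℝ => t) (quasispectrum ℝ d) := continuousOn_id
  have hFid : ContinuousOn (fun t : ℝ => Ffun k t * t) (quasispectrum ℝ d) := hF.mul hid
  have hidF : ContinuousOn (fun t : ℝ => t * Ffun k t) (quasispectrum ℝ d) := hid.mul hF
  have hFidF : ContinuousOn (fun t : ℝ => Ffun k t * t * Ffun k t) (quasispectrum ℝ d) :=
    hFid.mul hF
  have e1 : d - cfcₙ (Ffun k) d * d - d * cfcₙ (Ffun k) d
        + cfcₙ (Ffun k) d * d * cfcₙ (Ffun k) d
      = cfcₙ (fun t : ℝ => t - Ffun k t * t - t * Ffun k t + Ffun k t * t * Ffun k t) d := by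
    rw [cfcₙ_add _ _ d (by exact (hid.sub hFid).sub hidF) (by simp [Ffun_zero]) hFidF
      (by simp [Ffun_zero])]
    rw [cfcₙ_sub (fun t => t - Ffun k t * t) (fun t => t * Ffun k t) d (hid.sub hFid) (by simp [Ffun_zero]) hidF (by simp [Ffun_zero])]
    rw [cfcₙ_sub (fun t => t) (fun t => Ffun k t * t) d hid rfl hFid (by simp [Ffun_zero])]
    rw [cfcₙ_mul _ _ d hF (Ffun_zero k) hid rfl]
    rw [cfcₙ_mul _ _ d hid rfl hF (Ffun_zero k)]
    rw [cfcₙ_mul _ _ d hFid (by simp [Ffun_zero]) hF (Ffun_zero k)]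
    rw [cfcₙ_mul _ _ d hF (Ffun_zero k) hid rfl]
    rw [cfcₙ_id' ℝ d]
  rw [e1]
  apply norm_cfcₙ_le
  intro t ht
  have ht0 : 0 ≤ t := quasispectrum_nonneg_of_nonneg d hd t ht
  have hmax : max t 0 = t := max_eq_left ht0
  have hD : (0:ℝ) < ((k : ℝ) + 1) * t + 1 := by
    have := denom_pos k t
    rwa [hmax] at this
  have hm : (0:ℝ) < (k : ℝ) + 1 := by positivity
  rw [Real.norm_eq_abs]
  have key : t - Ffun k t * t - t * Ffun k t + Ffun k t * t * Ffun k t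
      = t / (((k : ℝ) + 1) * t + 1)^2 := by
    simp only [Ffun, hmax]
    field_simp
    ring
  rw [key, abs_of_nonneg (by positivity)]
  rw [div_le_div_iff₀ (by positivity) (by positivity)]
  nlinarith [sq_nonneg (((k : ℝ) + 1) * t - 1)]

lemma norm_P_le_one : ‖cfcₙ (Ffun k) d‖ ≤ 1 := by
  apply norm_cfcₙ_le
  intro t _
  rw [Real.norm_eq_abs, abs_of_nonneg (Ffun_nonneg k t)]
  exact Ffun_le_one k t

lemma key_est (v : A) (hv : v * star v ≤ d) :
    ‖v - cfcₙ (Ffun k) d * v‖ ≤ Real.sqrt (1 / (4 * ((k : ℝ) + 1))) := by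
  have hd_sa : IsSelfAdjoint d := .of_nonneg hd
  set P := cfcₙ (Ffun k) d with hP
  have hP_sa : IsSelfAdjoint P := cfcₙ_predicate _ _
  set Q : Unitization ℂ A := 1 - (P : Unitization ℂ A) with hQ
  have hQ_sa : star Q = Q := by
    rw [hQ, star_sub, star_one, ← Unitization.inr_star, hP_sa.star_eq]
  have h1 : ((v - P * v : A) : Unitization ℂ A) = Q * (v : Unitization ℂ A) := by
    rw [hQ, sub_mul, one_mul, Unitization.inr_sub, Unitization.inr_mul]
  have h2 : ‖Q * (v : Unitization ℂ A)‖ ^ 2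
      = ‖Q * ((v * star v : A) : Unitization ℂ A) * Q‖ := by
    rw [pow_two, ← CStarRing.norm_self_mul_star (x := Q * (v : Unitization ℂ A))]
    congr 1
    rw [StarMul.star_mul, hQ_sa, Unitization.inr_mul, ← Unitization.inr_star]
    noncomm_ring
  have hvv_sa : IsSelfAdjoint (v * star v) := IsSelfAdjoint.mul_star_self v
  have h3 : Q * ((v * star v : A) : Unitization ℂ A) * Q
      ≤ Q * ((d : A) : Unitization ℂ A) * Q := by
    have hle : ((v * star v : A) : Unitization ℂ A) ≤ ((d : A) : Unitization ℂ A) :=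
      (Unitization.inr_le_iff _ _ hvv_sa hd_sa).mpr hv
    have := star_left_conjugate_le_conjugate hle Q
    rwa [hQ_sa] at this
  have h4 : ‖Q * ((v * star v : A) : Unitization ℂ A) * Q‖
      ≤ ‖Q * ((d : A) : Unitization ℂ A) * Q‖ := by
    refine CStarAlgebra.norm_le_norm_of_nonneg_of_le ?_ h3
    have : Q * ((v * star v : A) : Unitization ℂ A) * Q
        = (Q * (v : Unitization ℂ A)) * star (Q * (v : Unitization ℂ A)) := by
      rw [StarMul.star_mul, hQ_sa, Unitization.inr_mul, ← Unitization.inr_star]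
      noncomm_ring
    rw [this]
    exact mul_star_self_nonneg _
  have h5 : Q * ((d : A) : Unitization ℂ A) * Q
      = ((d - P * d - d * P + P * d * P : A) : Unitization ℂ A) := by
    rw [hQ, Unitization.inr_add, Unitization.inr_sub, Unitization.inr_sub,
      Unitization.inr_mul, Unitization.inr_mul, Unitization.inr_mul, Unitization.inr_mul]
    noncomm_ring
  have h6 : ‖Q * (v : Unitization ℂ A)‖ ^ 2 ≤ 1 / (4 * ((k : ℝ) + 1)) := by
    rw [h2]
    calc ‖Q * ((v * star v : A) : Unitization ℂ A) * Q‖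
        ≤ ‖Q * ((d : A) : Unitization ℂ A) * Q‖ := h4
      _ = ‖d - P * d - d * P + P * d * P‖ := by rw [h5, Unitization.norm_inr]
      _ ≤ 1 / (4 * ((k : ℝ) + 1)) := errbound d hd k
  have h7 : ‖v - P * v‖ = ‖Q * (v : Unitization ℂ A)‖ := by
    rw [← h1, Unitization.norm_inr]
  rw [h7, ← Real.sqrt_sq (norm_nonneg (Q * (v : Unitization ℂ A)))]
  exact Real.sqrt_le_sqrt h6

end Est


lemma sqrtdelta_tendsto :
    Tendsto (fun k : ℕ => Real.sqrt (1 / (4 * ((k : ℝ) + 1)))) atTop (𝓝 0) := by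
  have h1 : Tendsto (fun k : ℕ => 4 * ((k : ℝ) + 1)) atTop atTop := by
    refine Tendsto.const_mul_atTop (by norm_num) ?_
    exact tendsto_atTop_add_const_right _ 1 tendsto_natCast_atTop_atTop
  have h2 : Tendsto (fun k : ℕ => (4 * ((k : ℝ) + 1))⁻¹) atTop (𝓝 0) :=
    h1.inv_tendsto_atTop
  have h3 := (Real.continuous_sqrt.tendsto' 0 0 Real.sqrt_zero).comp h2
  refine h3.congr fun k => ?_
  simp [Function.comp, one_div]

section Main

variable {n : ℕ}

set_option maxHeartbeats 2000000 in
lemma cuntz_part (a : Matrix (Fin n) (Fin n) A)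
    (ha : ∃ b : Matrix (Fin n) (Fin n) A, a = bᴴ * b) :
    ∃ x : ℕ → Matrix (Fin n) (Fin n) A,
      Tendsto (fun k => (x k)ᴴ * (Matrix.diagonal fun _ => ∑ j, a j j) * (x k)) atTop (𝓝 a) := by
  obtain ⟨s, hs_sa, hss⟩ := exists_sqrt a ha
  set d : A := ∑ j, a j j with hd_def
  have hentry : ∀ i j : Fin n, a i j = ∑ q, star (s q i) * s q j := by
    intro i j
    rw [← hss, Matrix.mul_apply]
    refine Finset.sum_congr rfl fun q _ => ?_
    congr 1
    calc s i q = sᴴ i q := by rw [hs_sa]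
      _ = star (s q i) := Matrix.conjTranspose_apply s q i
  have hdiag_nonneg : ∀ j, 0 ≤ a j j := fun j => by
    rw [hentry j j]; exact Finset.sum_nonneg fun q _ => star_mul_self_nonneg _
  have hd_nonneg : 0 ≤ d := Finset.sum_nonneg fun j _ => hdiag_nonneg j
  have hajj_le : ∀ j, a j j ≤ d := fun j =>
    Finset.single_le_sum (fun j' _ => hdiag_nonneg j') (Finset.mem_univ j)
  have hrow : ∀ q i, s q i * star (s q i) ≤ d := by
    intro q i
    have h1 : ∑ i', s q i' * star (s q i') = a q q := by
      rw [← hss, Matrix.mul_apply]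
      refine Finset.sum_congr rfl fun i' _ => ?_
      congr 1
      calc star (s q i') = sᴴ i' q := (Matrix.conjTranspose_apply s q i').symm
        _ = s i' q := by rw [hs_sa]
    calc s q i * star (s q i) ≤ ∑ i', s q i' * star (s q i') :=
          Finset.single_le_sum (f := fun i' => s q i' * star (s q i'))
            (fun i' _ => mul_star_self_nonneg _) (Finset.mem_univ i)
      _ = a q q := h1
      _ ≤ d := hajj_le q
  have hHsa : ∀ k, star (cfcₙ (hfun k) d) = cfcₙ (hfun k) d :=
    fun k => (cfcₙ_predicate (hfun k) d : IsSelfAdjoint _).star_eq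
  have hPsa : ∀ k, star (cfcₙ (Ffun k) d) = cfcₙ (Ffun k) d :=
    fun k => (cfcₙ_predicate (Ffun k) d : IsSelfAdjoint _).star_eq
  have hHdH : ∀ k (z : A), cfcₙ (hfun k) d * (d * (cfcₙ (hfun k) d * z))
      = cfcₙ (Ffun k) d * (cfcₙ (Ffun k) d * z) := by
    intro k z
    have h0 := HdH d hd_nonneg k
    calc cfcₙ (hfun k) d * (d * (cfcₙ (hfun k) d * z))
        = cfcₙ (hfun k) d * d * cfcₙ (hfun k) d * z := by noncomm_ring
      _ = cfcₙ (Ffun k) d * cfcₙ (Ffun k) d * z := by rw [h0]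
      _ = cfcₙ (Ffun k) d * (cfcₙ (Ffun k) d * z) := by noncomm_ring
  refine ⟨fun k => (Matrix.diagonal fun _ => cfcₙ (hfun k) d) * s, ?_⟩
  have hmat : ∀ k (i j : Fin n),
      (((Matrix.diagonal fun _ : Fin n => cfcₙ (hfun k) d) * s)ᴴ
          * (Matrix.diagonal fun _ : Fin n => d)
          * ((Matrix.diagonal fun _ : Fin n => cfcₙ (hfun k) d) * s)) i j
      = ∑ q, star (s q i) * (cfcₙ (Ffun k) d * (cfcₙ (Ffun k) d * s q j)) := by
    intro k i j
    rw [Matrix.mul_apply]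
    refine Finset.sum_congr rfl fun q _ => ?_
    rw [Matrix.mul_diagonal, Matrix.conjTranspose_apply, Matrix.diagonal_mul,
      Matrix.diagonal_mul, StarMul.star_mul, hHsa]
    simp only [mul_assoc]
    rw [hHdH]
  -- entrywise convergence
  have hconv : ∀ i j : Fin n,
      Tendsto (fun k => ∑ q, star (s q i) * (cfcₙ (Ffun k) d * (cfcₙ (Ffun k) d * s q j)))
        atTop (𝓝 (a i j)) := by
    intro i j
    rw [tendsto_iff_norm_sub_tendsto_zero]
    have hbound : ∀ k,
        ‖(∑ q, star (s q i) * (cfcₙ (Ffun k) d * (cfcₙ (Ffun k) d * s q j))) - a i j‖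
        ≤ (∑ q, (‖s q i‖ + ‖s q j‖)) * Real.sqrt (1 / (4 * ((k : ℝ) + 1))) := by
      intro k
      set P := cfcₙ (Ffun k) d with hPdef
      have hP_sa : IsSelfAdjoint P := cfcₙ_predicate _ _
      have hP1 : ‖P‖ ≤ 1 := norm_P_le_one d hd_nonneg k
      rw [hentry i j, ← Finset.sum_sub_distrib]
      refine (norm_sum_le _ _).trans ?_
      rw [Finset.sum_mul]
      refine Finset.sum_le_sum fun q _ => ?_
      set u := s q i
      set v := s q j
      have hu : ‖u - P * u‖ ≤ Real.sqrt (1 / (4 * ((k : ℝ) + 1))) :=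
        key_est d hd_nonneg k u (hrow q i)
      have hv : ‖v - P * v‖ ≤ Real.sqrt (1 / (4 * ((k : ℝ) + 1))) :=
        key_est d hd_nonneg k v (hrow q j)
      have hsplit : star u * (P * (P * v)) - star u * v
          = -(star u * (v - P * v) + (star u - star u * P) * (P * v)) := by
        noncomm_ring
      rw [hsplit, norm_neg]
      have hstar_eq : star u - star u * P = star (u - P * u) := by
        rw [star_sub, StarMul.star_mul, hP_sa.star_eq]
      have hPv : ‖P * v‖ ≤ ‖v‖ := by
        calc ‖P * v‖ ≤ ‖P‖ * ‖v‖ := norm_mul_le _ _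
          _ ≤ 1 * ‖v‖ := by gcongr
          _ = ‖v‖ := one_mul _
      calc ‖star u * (v - P * v) + (star u - star u * P) * (P * v)‖
          ≤ ‖star u * (v - P * v)‖ + ‖(star u - star u * P) * (P * v)‖ := norm_add_le _ _
        _ ≤ ‖star u‖ * ‖v - P * v‖ + ‖star u - star u * P‖ * ‖P * v‖ :=
            add_le_add (norm_mul_le _ _) (norm_mul_le _ _)
        _ = ‖u‖ * ‖v - P * v‖ + ‖u - P * u‖ * ‖P * v‖ := by
            rw [norm_star, hstar_eq, norm_star]
        _ ≤ ‖u‖ * Real.sqrt (1 / (4 * ((k : ℝ) + 1)))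
              + Real.sqrt (1 / (4 * ((k : ℝ) + 1))) * ‖v‖ := by
            exact add_le_add (mul_le_mul_of_nonneg_left hv (norm_nonneg _))
              (mul_le_mul hu hPv (norm_nonneg _) (Real.sqrt_nonneg _))
        _ = (‖u‖ + ‖v‖) * Real.sqrt (1 / (4 * ((k : ℝ) + 1))) := by ring
    have hzero : Tendsto
        (fun k : ℕ => (∑ q, (‖s q i‖ + ‖s q j‖)) * Real.sqrt (1 / (4 * ((k : ℝ) + 1))))
        atTop (𝓝 0) := by
      simpa using sqrtdelta_tendsto.const_mul (∑ q, (‖s q i‖ + ‖s q j‖))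
    exact squeeze_zero (fun k => norm_nonneg _) hbound hzero
  have hfinal : ∀ i j : Fin n,
      Tendsto (fun k =>
        (((Matrix.diagonal fun _ : Fin n => cfcₙ (hfun k) d) * s)ᴴ
          * (Matrix.diagonal fun _ : Fin n => d)
          * ((Matrix.diagonal fun _ : Fin n => cfcₙ (hfun k) d) * s)) i j) atTop (𝓝 (a i j)) := by
    intro i j
    exact (hconv i j).congr fun k => (hmat k i j).symm
  exact tendsto_pi_nhds.mpr fun i => tendsto_pi_nhds.mpr fun j => hfinal i j

end Main


/-- Lemma 5.2: if `c` is strictly positive in `A` and `a = (a_{ij})` is a positive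
element of `Mₙ(A)` with diagonal sum `d = Σⱼ a_{jj}`, then `a ≾ d ⊗ 1ₙ`; moreover if
`a ∈ F_{c ⊗ 1ₙ}(Mₙ(A))` then `d ∈ F_c(A)`. -/
theorem diagonal_sum_dominates
    (c : A) (hc : StrictlyPositive c)
    {n : ℕ} (a : Matrix (Fin n) (Fin n) A) (ha : MatPos a) :
    CuntzLeMat a (tensorOne (∑ j, a j j) n) ∧
      (a ∈ FcMat c n → (∑ j, a j j) ∈ Fc c) := by
  constructor
  · obtain ⟨x, hx⟩ := cuntz_part a ha
    exact ⟨x, hx⟩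
  · rintro ⟨-, ε, hε, heq⟩
    refine ⟨?_, ε, hε, ?_⟩
    · obtain ⟨b, hb⟩ := ha
      refine Finset.sum_nonneg fun j _ => ?_
      rw [hb, Matrix.mul_apply]
      refine Finset.sum_nonneg fun q _ => ?_
      rw [Matrix.conjTranspose_apply]
      exact star_mul_self_nonneg _
    · rw [Finset.mul_sum]
      refine Finset.sum_congr rfl fun j _ => ?_
      have h1 := congrFun (congrFun heq j) j
      simpa [tensorOne, Matrix.diagonal_mul] using h1

end Stmt13
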